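/- Let T be a monad on a small category C, and let Kl(T) be its Kleisli category: objects are those of C and morphisms c ⟶ d in Kl(T) are morphisms c ⟶ T(d) in C, with composition given by the multiplication of T. Let N : Alg(T) ⥤ Pr(Kl(T)) be the functor sending a T-algebra X = (A, a : T A ⟶ A) to the presheaf c ↦ Hom_C(c, A), where a Kleisli morphism f : c' ⟶ T(c) acts by sending g : c ⟶ A to f ≫ T(g) ≫ a. Then: (1) N is fully faithful; and (2) a presheaf P on Kl(T) lies in the essential image of N if and only if the restriction of P along the free functor C ⥤ Kl(T) (identity on objects, sending g : c ⟶ d to g composed with the unit of T) is a representable presheaf on C. -/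

import Mathlib

open CategoryTheory

universe v u

variable {C : Type u} [Category.{v} C]

/-- View an object of the Kleisli category of `T` as an object of `C`
(the two classes of objects coincide by definition). -/
def Kleisli.toBase {T : Monad C} (c : Kleisli T) : C := c.of

/-- The presheaf on the Kleisli category of `T` associated to a `T`-algebra
`X = (A, a)`: it sends `c` to `Hom_C(c, A)`, and a Kleisli morphism
`f : c' ⟶ T c` acts by `g ↦ f ≫ T g ≫ a`. -/
def algebraPresheaf (T : Monad C) (X : T.Algebra) : (Kleisli T)ᵒᵖ ⥤ Type v where
  obj c := Kleisli.toBase c.unop ⟶ X.A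
  map {c c'} f := TypeCat.ofHom fun g =>
    (show Kleisli.toBase c'.unop ⟶ T.obj (Kleisli.toBase c.unop) from f.unop.of) ≫
      T.map g ≫ X.a
  map_id c := by
    ext g
    change T.η.app _ ≫ T.map g ≫ X.a = g
    rw [← Category.assoc, ← T.η.naturality g]
    dsimp
    rw [Category.assoc, X.unit, Category.comp_id]
  map_comp {c c' c''} f g := by
    ext h
    show ((show Kleisli.toBase c''.unop ⟶ T.obj (Kleisli.toBase c'.unop) from g.unop.of) ≫
          T.map (show Kleisli.toBase c'.unop ⟶ T.obj (Kleisli.toBase c.unop) from f.unop.of) ≫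
          T.μ.app (Kleisli.toBase c.unop)) ≫ T.map h ≫ X.a =
        (show Kleisli.toBase c''.unop ⟶ T.obj (Kleisli.toBase c'.unop) from g.unop.of) ≫
          T.map ((show Kleisli.toBase c'.unop ⟶ T.obj (Kleisli.toBase c.unop) from f.unop.of) ≫
            T.map h ≫ X.a) ≫ X.a
    simp only [Kleisli.toBase] at h ⊢
    simp only [Functor.map_comp, Category.assoc]
    rw [← X.assoc, ← T.μ.naturality_assoc h X.a]
    rfl

/-- The restricted-Yoneda functor `N : Alg(T) ⥤ Pr(Kl(T))` sending a
`T`-algebra `X` to the presheaf `c ↦ Hom_C(c, X.A)` on the Kleisli category. -/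
def algebraToKleisliPresheaves (T : Monad C) :
    T.Algebra ⥤ ((Kleisli T)ᵒᵖ ⥤ Type v) where
  obj X := algebraPresheaf T X
  map {X Y} h :=
    { app := fun c => TypeCat.ofHom fun g => g ≫ h.f
      naturality := fun c c' f => by
        ext g
        change (_ ≫ T.map g ≫ X.a) ≫ h.f = _ ≫ T.map (g ≫ h.f) ≫ Y.a
        change Kleisli.toBase c.unop ⟶ X.A at g
        simp only [Kleisli.toBase] at g ⊢
        simp only [Functor.map_comp, Category.assoc, h.h]
    }
  map_id X := by
    ext c g
    simp [algebraPresheaf]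
    rfl
  map_comp {X Y Z} f g := by
    ext c h
    simp [algebraPresheaf]
    change _ = (h ≫ f.f) ≫ g.f
    exact (Category.assoc _ _ _).symm

/-! ### Auxiliary material -/

/-- An object of `C` viewed in the Kleisli category. -/
def klObj (T : Monad C) (c : C) : Kleisli T := Kleisli.mk T c

/-- A Kleisli morphism from its underlying `C`-morphism. -/
def klHom (T : Monad C) {c d : C} (k : c ⟶ T.obj d) : klObj T c ⟶ klObj T d := ⟨k⟩

lemma klHom_comp (T : Monad C) {c d e : C} (k : c ⟶ T.obj d) (l : d ⟶ T.obj e) :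
    klHom T k ≫ klHom T l = klHom T (k ≫ T.map l ≫ T.μ.app e) := rfl

lemma klHom_id (T : Monad C) (c : C) : klHom T (T.η.app c) = 𝟙 (klObj T c) := rfl

lemma toKleisli_map_eq (T : Monad C) {c d : C} (g : c ⟶ d) :
    (Kleisli.Adjunction.toKleisli T).map g = klHom T (g ≫ T.η.app d) := rfl

lemma algebraPresheaf_map_apply (T : Monad C) (X : T.Algebra) {c d : C}
    (k : c ⟶ T.obj d) (h : d ⟶ X.A) :
    (algebraPresheaf T X).map (klHom T k).op h = k ≫ T.map h ≫ X.a := rfl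

/-- Key computation: how a natural transformation between algebra presheaves acts. -/
lemma alg_natTrans_eq (T : Monad C) {X Y : T.Algebra}
    (α : algebraPresheaf T X ⟶ algebraPresheaf T Y) {c : C} (g : c ⟶ X.A) :
    α.app (Opposite.op (klObj T c)) g =
      g ≫ α.app (Opposite.op (klObj T X.A)) (𝟙 X.A) := by
  have h := NatTrans.naturality_apply α (klHom T (g ≫ T.η.app X.A)).op (𝟙 X.A)
  erw [algebraPresheaf_map_apply, algebraPresheaf_map_apply] at h
  simp only [CategoryTheory.Functor.map_id, Category.comp_id, Category.id_comp,
    Category.assoc, X.unit_assoc, X.unit] at h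
  rw [h]
  have w : T.η.app X.A ≫ T.map (α.app (Opposite.op (klObj T X.A)) (𝟙 X.A)) =
      α.app (Opposite.op (klObj T X.A)) (𝟙 X.A) ≫ T.η.app Y.A :=
    (T.η.naturality _).symm
  rw [reassoc_of% w]
  erw [Category.assoc, Y.unit, Category.comp_id]

lemma alg_natTrans_hom (T : Monad C) {X Y : T.Algebra}
    (α : algebraPresheaf T X ⟶ algebraPresheaf T Y) :
    X.a ≫ α.app (Opposite.op (klObj T X.A)) (𝟙 X.A) =
      T.map (α.app (Opposite.op (klObj T X.A)) (𝟙 X.A)) ≫ Y.a := by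
  have h := NatTrans.naturality_apply α (klHom T (𝟙 (T.obj X.A))).op (𝟙 X.A)
  erw [algebraPresheaf_map_apply, algebraPresheaf_map_apply] at h
  simp only [CategoryTheory.Functor.map_id, Category.comp_id, Category.id_comp] at h
  rw [alg_natTrans_eq T α X.a] at h
  exact h

/-- The restriction of the algebra presheaf along the free functor is the
presheaf represented by the underlying object. -/
def restrictIso (T : Monad C) (X : T.Algebra) :
    yoneda.obj X.A ≅ (Kleisli.Adjunction.toKleisli T).op ⋙ algebraPresheaf T X :=
  NatIso.ofComponents (fun c => Iso.refl _) (by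
    intro c c' f
    ext h
    show f.unop ≫ h = (f.unop ≫ T.η.app _) ≫ T.map h ≫ X.a
    rw [Category.assoc, ← T.η.naturality_assoc h X.a]
    simp [X.unit])

lemma ess_of_repr (T : Monad C) (P : (Kleisli T)ᵒᵖ ⥤ Type v) (A : C)
    (e : yoneda.obj A ≅ (Kleisli.Adjunction.toKleisli T).op ⋙ P) :
    (algebraToKleisliPresheaves T).essImage P := by
  have nat : ∀ {c d : C} (g : c ⟶ d) (h : d ⟶ A),
      e.hom.app (Opposite.op c) (g ≫ h) =
        P.map ((Kleisli.Adjunction.toKleisli T).map g).op (e.hom.app (Opposite.op d) h) := by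
    intro c d g h
    exact types_congr_hom (e.hom.naturality g.op) h
  have h2 : ∀ {d : C} (h : d ⟶ A),
      e.hom.app (Opposite.op d) h =
        P.map ((Kleisli.Adjunction.toKleisli T).map h).op (e.hom.app (Opposite.op A) (𝟙 A)) := by
    intro d h
    simpa using nat h (𝟙 A)
  set a : T.obj A ⟶ A :=
    e.inv.app (Opposite.op (T.obj A))
      (P.map (klHom T (𝟙 (T.obj A))).op (e.hom.app (Opposite.op A) (𝟙 A))) with ha_def
  have ha : e.hom.app (Opposite.op (T.obj A)) a =
      P.map (klHom T (𝟙 (T.obj A))).op (e.hom.app (Opposite.op A) (𝟙 A)) :=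
    types_congr_hom (e.inv_hom_id_app (Opposite.op (T.obj A))) _
  have star : ∀ {c d : C} (k : c ⟶ T.obj d) (h : d ⟶ A),
      P.map (klHom T k).op (e.hom.app (Opposite.op d) h) =
        e.hom.app (Opposite.op c) (k ≫ T.map h ≫ a) := by
    intro c d k h
    rw [h2 h, ← Category.assoc, nat (k ≫ T.map h) a, ha]
    erw [← FunctorToTypes.map_comp_apply, ← FunctorToTypes.map_comp_apply]
    erw [← op_comp, ← op_comp]
    erw [toKleisli_map_eq, toKleisli_map_eq, klHom_comp, klHom_comp]
    simp
    rfl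
  have inj : ∀ (c : Cᵒᵖ), Function.Injective (e.hom.app c) := fun c =>
    fun x y hxy => by
      have := congrArg (e.inv.app c) hxy
      simpa [types_congr_hom (e.hom_inv_id_app c) x, types_congr_hom (e.hom_inv_id_app c) y] using this
  have hunit : T.η.app A ≫ a = 𝟙 A := by
    apply inj (Opposite.op A)
    have s := star (T.η.app A) (𝟙 A)
    rw [klHom_id] at s
    simp at s
    erw [types_id_apply] at s
    exact s.symm
  have hassoc : T.μ.app A ≫ a = T.map a ≫ a := by
    apply inj (Opposite.op (T.obj (T.obj A)))
    have s1 := star (T.μ.app A) (𝟙 A)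
    have s2 := star (𝟙 (T.obj (T.obj A))) a
    rw [ha] at s2
    erw [← FunctorToTypes.map_comp_apply] at s2
    erw [← op_comp, klHom_comp] at s2
    simp only [CategoryTheory.Functor.map_id, Category.id_comp, Category.comp_id] at s1 s2
    exact s1.symm.trans s2
  refine ⟨⟨A, a, hunit, hassoc⟩, ⟨?_⟩⟩
  exact NatIso.ofComponents (fun c => e.app (Opposite.op (Kleisli.toBase c.unop)))
    (by
      intro c c' f
      ext h
      exact (star f.unop.of h).symm)

/-- paper's prop:EM_pb_of_Kl, 1-categorical form:
the restricted Yoneda functor `N : Alg(T) ⥤ Pr(Kl(T))` is fully faithful, and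
a presheaf on the Kleisli category lies in its essential image if and only if
its restriction along the free functor `C ⥤ Kl(T)` is representable. -/
theorem stmt_13 {C : Type u} [SmallCategory C] (T : Monad C) :
    (algebraToKleisliPresheaves T).Full ∧
    (algebraToKleisliPresheaves T).Faithful ∧
    ∀ P : (Kleisli T)ᵒᵖ ⥤ Type u,
      (algebraToKleisliPresheaves T).essImage P ↔
        ((Kleisli.Adjunction.toKleisli T).op ⋙ P).IsRepresentable := by
  refine ⟨⟨?_⟩, ⟨?_⟩, ?_⟩
  · -- full
    intro X Y α
    refine ⟨⟨α.app (Opposite.op (klObj T X.A)) (𝟙 X.A), (alg_natTrans_hom T α).symm⟩, ?_⟩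
    ext c g
    exact (alg_natTrans_eq T α g).symm
  · -- faithful
    intro X Y h h' hyp
    ext1
    have h0 : 𝟙 X.A ≫ h.f = 𝟙 X.A ≫ h'.f :=
      types_congr_hom (congrArg (fun β => β.app (Opposite.op (klObj T X.A))) hyp) (𝟙 X.A)
    simpa using h0
  · intro P
    constructor
    · rintro ⟨X, ⟨i⟩⟩
      exact Functor.IsRepresentable.mk'
        (restrictIso T X ≪≫ Functor.isoWhiskerLeft (Kleisli.Adjunction.toKleisli T).op i)
    · intro hP
      exact ess_of_repr T P _
        (Functor.reprW ((Kleisli.Adjunction.toKleisli T).op ⋙ P))
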